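/- For every N ≥ 2, the elementary N-qubit hypergraph state (the state whose coefficient on |11…1⟩ is −1 and whose coefficient on every other computational basis vector is 1) is SLOCC-equivalent to the N-qubit GHZ state |0⟩^{⊗N} + |1⟩^{⊗N}. -/
import Mathlib


/-- The `N`-qubit GHZ state `|0…0⟩ + |1…1⟩`. -/
noncomputable def GHZ (N : ℕ) : (Fin N → Fin 2) → ℂ :=
  fun f => if (∀ k, f k = 0) ∨ (∀ k, f k = 1) then 1 else 0

/-- The elementary `N`-qubit hypergraph state: coefficient `-1` on `|1…1⟩`
and `1` on every other computational basis vector. -/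
noncomputable def elementaryHypergraph (N : ℕ) : (Fin N → Fin 2) → ℂ :=
  fun f => if ∀ k, f k = 1 then -1 else 1

/-- For `N ≥ 2`, the elementary `N`-qubit hypergraph state is SLOCC-equivalent to
the `N`-qubit GHZ state. -/
theorem elementaryHypergraph_slocc_equiv_ghz (N : ℕ) (hN : 2 ≤ N) :
    ∃ A : Fin N → Matrix (Fin 2) (Fin 2) ℂ,
      (∀ k, IsUnit (A k)) ∧
      ∀ f : Fin N → Fin 2,
        GHZ N f = ∑ g : Fin N → Fin 2, (∏ k, A k (f k) (g k)) * elementaryHypergraph N g := by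
  classical
  set A : Fin N → Matrix (Fin 2) (Fin 2) ℂ :=
    fun k => if (k : ℕ) = 0 then !![1/2, -1/2; 1, 0] else !![-1, 1; 1, 0] with hA
  refine ⟨A, ?_, ?_⟩
  · intro k
    rw [Matrix.isUnit_iff_isUnit_det]
    by_cases hk : (k : ℕ) = 0 <;>
      simp [hA, hk, Matrix.det_fin_two_of, isUnit_iff_ne_zero] <;> norm_num
  · intro f
    have heh : ∀ g : Fin N → Fin 2, elementaryHypergraph N g
        = 1 - 2 * ∏ k, (if g k = 1 then (1:ℂ) else 0) := by
      intro g
      unfold elementaryHypergraph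
      by_cases h : ∀ k, g k = 1
      · simp [h]; ring
      · rw [if_neg h]
        push_neg at h
        obtain ⟨k, hk⟩ := h
        rw [Finset.prod_eq_zero (Finset.mem_univ k) (by simp [hk])]
        ring
    have hsplit : ∑ g : Fin N → Fin 2, (∏ k, A k (f k) (g k)) * elementaryHypergraph N g
        = (∑ g : Fin N → Fin 2, ∏ k, A k (f k) (g k))
          - 2 * ∑ g : Fin N → Fin 2, ∏ k, (A k (f k) (g k) * if g k = 1 then (1:ℂ) else 0) := by
      rw [Finset.mul_sum, ← Finset.sum_sub_distrib]
      refine Finset.sum_congr rfl fun g _ => ?_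
      rw [heh g, Finset.prod_mul_distrib]
      ring
    rw [hsplit,
        ← Fintype.prod_sum (fun k j => A k (f k) j),
        ← Fintype.prod_sum (fun k j => A k (f k) j * if j = 1 then (1:ℂ) else 0)]
    have hfk : ∀ k, f k = 0 ∨ f k = 1 := fun k => by omega
    have hrow : ∀ k, (∑ j, A k (f k) j) = if f k = 1 then 1 else 0 := by
      intro k
      rcases hfk k with h | h <;> rw [h] <;> rw [hA] <;>
        by_cases hk : (k : ℕ) = 0 <;> simp [hk, Fin.sum_univ_two] <;> norm_num
    have hcol : ∀ k, (∑ j, A k (f k) j * if j = 1 then (1:ℂ) else 0)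
        = if f k = 0 then (if (k : ℕ) = 0 then -1/2 else 1) else 0 := by
      intro k
      rcases hfk k with h | h <;> rw [h] <;> rw [hA] <;>
        by_cases hk : (k : ℕ) = 0 <;> simp [hk, Fin.sum_univ_two] <;> norm_num
    simp only [hrow, hcol]
    set k0 : Fin N := ⟨0, by omega⟩ with hk0
    unfold GHZ
    by_cases h1 : ∀ k, f k = 1
    · have h0 : ¬ ∀ k, f k = 0 := fun h => by have := h k0; have := h1 k0; omega
      rw [if_pos (Or.inr h1)]
      rw [Finset.prod_eq_one (fun k _ => by rw [if_pos (h1 k)])]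
      rw [Finset.prod_eq_zero (Finset.mem_univ k0) (by rw [if_neg (by rw [h1 k0]; omega)])]
      ring
    · by_cases h0 : ∀ k, f k = 0
      · rw [if_pos (Or.inl h0)]
        push_neg at h1
        obtain ⟨k, hk⟩ := h1
        rw [Finset.prod_eq_zero (Finset.mem_univ k) (by rw [if_neg hk])]
        have : ∏ k : Fin N, (if f k = 0 then (if (k : ℕ) = 0 then (-1/2 : ℂ) else 1) else 0)
            = ∏ k : Fin N, (if (k : ℕ) = 0 then (-1/2 : ℂ) else 1) :=
          Finset.prod_congr rfl fun k _ => by rw [if_pos (h0 k)]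
        rw [this]
        have : ∏ k : Fin N, (if (k : ℕ) = 0 then (-1/2 : ℂ) else 1) = -1/2 := by
          rw [Finset.prod_eq_single k0 (fun b _ hb => by
              rw [if_neg (fun hc => hb (by rw [hk0]; exact Fin.ext hc))])
            (fun h => absurd (Finset.mem_univ k0) h)]
          simp [hk0]
        rw [this]
        ring
      · rw [if_neg (by tauto)]
        push_neg at h1 h0
        obtain ⟨k, hk⟩ := h1
        obtain ⟨k', hk'⟩ := h0
        rw [Finset.prod_eq_zero (Finset.mem_univ k) (by rw [if_neg hk])]
        rw [Finset.prod_eq_zero (Finset.mem_univ k') (by rw [if_neg hk'])]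
        ring
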